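/- Let d, L ≥ 1, let q ∈ ℝ^d with ‖q‖ ≤ Q_max, let k_1,…,k_L ∈ ℝ^d be keys and k̃_1,…,k̃_L ∈ ℝ^d the keys after freezing, and suppose max_{1≤i≤L} ‖k̃_i − k_i‖ ≤ B e^{−μ(ℓ−ℓ_s)} for constants B > 0, μ > 0 and integers ℓ ≥ ℓ_s. Let A and Ã be the attention weights computed from the keys k_i and k̃_i respectively (with the same query q). Then the freezing-induced mass gap satisfies (1/2) Σ_{i=1}^L |Ã_i − A_i| ≤ (Q_max/√d) · B e^{−μ(ℓ−ℓ_s)}. -/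
import Mathlib


open scoped RealInnerProductSpace

/-- Attention weights `A_i(q) = exp(⟨q,k_i⟩/√d) / ∑_j exp(⟨q,k_j⟩/√d)`. -/
noncomputable def attnWeight {d L : ℕ} (k : Fin L → EuclideanSpace ℝ (Fin d))
    (q : EuclideanSpace ℝ (Fin d)) (i : Fin L) : ℝ :=
  Real.exp (⟪q, k i⟫ / Real.sqrt d) / ∑ j, Real.exp (⟪q, k j⟫ / Real.sqrt d)

lemma sinh_le_mul_cosh' {x : ℝ} (hx : 0 ≤ x) : Real.sinh x ≤ x * Real.cosh x := by
  have key : ∀ y : ℝ, HasDerivAt (fun y : ℝ => y * Real.cosh y - Real.sinh y)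
      (1 * Real.cosh y + y * Real.sinh y - Real.cosh y) y := fun y =>
    ((hasDerivAt_id y).mul (Real.hasDerivAt_cosh y)).sub (Real.hasDerivAt_sinh y)
  have h : MonotoneOn (fun y : ℝ => y * Real.cosh y - Real.sinh y) (Set.Ici 0) := by
    apply monotoneOn_of_deriv_nonneg (convex_Ici 0)
    · fun_prop
    · intro y _
      exact (key y).differentiableAt.differentiableWithinAt
    · intro y hy
      rw [(key y).deriv]
      have hy0 : (0:ℝ) ≤ y := le_of_lt (by simpa using hy)
      nlinarith [Real.sinh_nonneg_iff.mpr hy0]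
  have := h (Set.self_mem_Ici) (Set.mem_Ici.mpr hx) hx
  simpa using this

lemma exp_ratio_le {ε : ℝ} (hε : 0 ≤ ε) :
    Real.exp ε * Real.exp ε - 1 ≤ ε * (Real.exp ε * Real.exp ε + 1) := by
  have h := sinh_le_mul_cosh' hε
  rw [Real.sinh_eq, Real.cosh_eq, Real.exp_neg] at h
  have hu : 0 < Real.exp ε := Real.exp_pos ε
  have huv : Real.exp ε * (Real.exp ε)⁻¹ = 1 := mul_inv_cancel₀ (ne_of_gt hu)
  nlinarith [h, hu, huv]


/-- if the frozen keys satisfy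
`max_i ‖k̃_i − k_i‖ ≤ B e^{−μ(ℓ−ℓ_s)}` and `‖q‖ ≤ Q_max`, then the total variation
distance between the corresponding attention weight vectors is at most
`(Q_max/√d) · B e^{−μ(ℓ−ℓ_s)}`. -/
theorem freezing_mass_gap (d L : ℕ) (hd : 1 ≤ d) (hL : 1 ≤ L)
    (q : EuclideanSpace ℝ (Fin d)) (Qmax : ℝ) (hq : ‖q‖ ≤ Qmax)
    (k ktil : Fin L → EuclideanSpace ℝ (Fin d))
    (B μ : ℝ) (hB : 0 < B) (hμ : 0 < μ)
    (ℓ ℓs : ℤ) (hℓ : ℓs ≤ ℓ)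
    (hkey : ∀ i, ‖ktil i - k i‖ ≤ B * Real.exp (-μ * ((ℓ : ℝ) - (ℓs : ℝ)))) :
    (1 / 2) * ∑ i, |attnWeight ktil q i - attnWeight k q i| ≤
      (Qmax / Real.sqrt d) * B * Real.exp (-μ * ((ℓ : ℝ) - (ℓs : ℝ))) := by
  have hdpos : (0:ℝ) < (d:ℝ) := by exact_mod_cast Nat.lt_of_lt_of_le Nat.zero_lt_one hd
  have hsd : 0 < Real.sqrt d := Real.sqrt_pos.mpr hdpos
  have hQ0 : 0 ≤ Qmax := le_trans (norm_nonneg q) hq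
  set E : ℝ := B * Real.exp (-μ * ((ℓ : ℝ) - (ℓs : ℝ))) with hEdef
  have hE0 : 0 < E := mul_pos hB (Real.exp_pos _)
  set ε : ℝ := Qmax / Real.sqrt d * E with hεdef
  have hε0 : 0 ≤ ε := by positivity
  -- score perturbation bound
  have hscore : ∀ i, |⟪q, ktil i⟫ / Real.sqrt d - ⟪q, k i⟫ / Real.sqrt d| ≤ ε := by
    intro i
    rw [div_sub_div_same, abs_div, abs_of_pos hsd]
    have h1 : ⟪q, ktil i⟫ - ⟪q, k i⟫ = ⟪q, ktil i - k i⟫ := (inner_sub_right q _ _).symm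
    rw [h1]
    have h2 : |⟪q, ktil i - k i⟫| ≤ ‖q‖ * ‖ktil i - k i‖ := abs_real_inner_le_norm _ _
    have h3 : ‖q‖ * ‖ktil i - k i‖ ≤ Qmax * E := by
      apply mul_le_mul hq (hkey i) (norm_nonneg _) hQ0
    rw [hεdef, div_mul_eq_mul_div]
    exact div_le_div_of_nonneg_right (le_trans h2 h3) hsd.le |>.trans_eq rfl
  -- notation
  set A : Fin L → ℝ := attnWeight k q with hAdef
  set At : Fin L → ℝ := attnWeight ktil q with hAtdef
  have hne : (Finset.univ : Finset (Fin L)).Nonempty := by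
    have : Nonempty (Fin L) := Fin.pos_iff_nonempty.mp hL
    exact Finset.univ_nonempty
  have hZk : 0 < ∑ j, Real.exp (⟪q, k j⟫ / Real.sqrt d) :=
    Finset.sum_pos (fun j _ => Real.exp_pos _) hne
  have hZkt : 0 < ∑ j, Real.exp (⟪q, ktil j⟫ / Real.sqrt d) :=
    Finset.sum_pos (fun j _ => Real.exp_pos _) hne
  have hA1 : ∑ i, A i = 1 := by
    rw [hAdef]; unfold attnWeight; rw [← Finset.sum_div, div_self (ne_of_gt hZk)]
  have hAt1 : ∑ i, At i = 1 := by
    rw [hAtdef]; unfold attnWeight; rw [← Finset.sum_div, div_self (ne_of_gt hZkt)]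
  have hApos : ∀ i, 0 < A i := fun i => div_pos (Real.exp_pos _) hZk
  have hAtpos : ∀ i, 0 < At i := fun i => div_pos (Real.exp_pos _) hZkt
  -- exp bounds pointwise
  have hexp1 : ∀ i, Real.exp (⟪q, ktil i⟫ / Real.sqrt d) ≤
      Real.exp (⟪q, k i⟫ / Real.sqrt d) * Real.exp ε := by
    intro i
    rw [← Real.exp_add]
    apply Real.exp_le_exp.mpr
    have := abs_le.mp (hscore i)
    linarith [this.2]
  have hexp2 : ∀ i, Real.exp (⟪q, k i⟫ / Real.sqrt d) ≤
      Real.exp (⟪q, ktil i⟫ / Real.sqrt d) * Real.exp ε := by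
    intro i
    rw [← Real.exp_add]
    apply Real.exp_le_exp.mpr
    have := abs_le.mp (hscore i)
    linarith [this.1]
  have hZ1 : ∑ j, Real.exp (⟪q, ktil j⟫ / Real.sqrt d) ≤
      (∑ j, Real.exp (⟪q, k j⟫ / Real.sqrt d)) * Real.exp ε := by
    rw [Finset.sum_mul]; exact Finset.sum_le_sum fun j _ => hexp1 j
  have hZ2 : ∑ j, Real.exp (⟪q, k j⟫ / Real.sqrt d) ≤
      (∑ j, Real.exp (⟪q, ktil j⟫ / Real.sqrt d)) * Real.exp ε := by
    rw [Finset.sum_mul]; exact Finset.sum_le_sum fun j _ => hexp2 j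
  set c : ℝ := Real.exp ε * Real.exp ε with hcdef
  have hc1 : 1 ≤ c := by
    have := Real.one_le_exp hε0
    nlinarith
  -- ratio bounds on attention weights
  have hAB : ∀ i, At i ≤ A i * c := by
    intro i
    rw [hAtdef, hAdef]; unfold attnWeight
    rw [div_mul_eq_mul_div, div_le_div_iff₀ hZkt hZk]
    calc Real.exp (⟪q, ktil i⟫ / Real.sqrt d) * ∑ j, Real.exp (⟪q, k j⟫ / Real.sqrt d)
        ≤ (Real.exp (⟪q, k i⟫ / Real.sqrt d) * Real.exp ε) *
          ((∑ j, Real.exp (⟪q, ktil j⟫ / Real.sqrt d)) * Real.exp ε) := by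
          apply mul_le_mul (hexp1 i) hZ2 (le_of_lt hZk) (by positivity)
      _ = Real.exp (⟪q, k i⟫ / Real.sqrt d) * c * ∑ j, Real.exp (⟪q, ktil j⟫ / Real.sqrt d) := by
          rw [hcdef]; ring
  have hBA : ∀ i, A i ≤ At i * c := by
    intro i
    rw [hAtdef, hAdef]; unfold attnWeight
    rw [div_mul_eq_mul_div, div_le_div_iff₀ hZk hZkt]
    calc Real.exp (⟪q, k i⟫ / Real.sqrt d) * ∑ j, Real.exp (⟪q, ktil j⟫ / Real.sqrt d)
        ≤ (Real.exp (⟪q, ktil i⟫ / Real.sqrt d) * Real.exp ε) *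
          ((∑ j, Real.exp (⟪q, k j⟫ / Real.sqrt d)) * Real.exp ε) := by
          apply mul_le_mul (hexp2 i) hZ1 (le_of_lt hZkt) (by positivity)
      _ = Real.exp (⟪q, ktil i⟫ / Real.sqrt d) * c * ∑ j, Real.exp (⟪q, k j⟫ / Real.sqrt d) := by
          rw [hcdef]; ring
  -- split by sign
  set S : Finset (Fin L) := Finset.univ.filter (fun i => A i < At i) with hSdef
  set pS : ℝ := ∑ i ∈ S, At i with hpSdef
  set qS : ℝ := ∑ i ∈ S, A i with hqSdef
  have hsplitA : qS + ∑ i ∈ Finset.univ.filter (fun i => ¬ A i < At i), A i = 1 := by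
    rw [hqSdef, hSdef, Finset.sum_filter_add_sum_filter_not]; exact hA1
  have hsplitAt : pS + ∑ i ∈ Finset.univ.filter (fun i => ¬ A i < At i), At i = 1 := by
    rw [hpSdef, hSdef, Finset.sum_filter_add_sum_filter_not]; exact hAt1
  have habs : ∑ i, |At i - A i| = (pS - qS) + ((1 - qS) - (1 - pS)) := by
    rw [← Finset.sum_filter_add_sum_filter_not Finset.univ (fun i => A i < At i)]
    have e1 : ∑ i ∈ Finset.univ.filter (fun i => A i < At i), |At i - A i|
        = pS - qS := by
      rw [hpSdef, hqSdef, ← Finset.sum_sub_distrib]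
      apply Finset.sum_congr rfl
      intro i hi
      rw [Finset.mem_filter] at hi
      rw [abs_of_pos (by linarith [hi.2])]
    have e2 : ∑ i ∈ Finset.univ.filter (fun i => ¬ A i < At i), |At i - A i|
        = (1 - qS) - (1 - pS) := by
      have : ∑ i ∈ Finset.univ.filter (fun i => ¬ A i < At i), |At i - A i|
          = ∑ i ∈ Finset.univ.filter (fun i => ¬ A i < At i), (A i - At i) := by
        apply Finset.sum_congr rfl
        intro i hi
        rw [Finset.mem_filter] at hi
        rw [abs_of_nonpos (by push_neg at hi; linarith [hi.2])]
        ring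
      rw [this, Finset.sum_sub_distrib]
      have h1 : ∑ i ∈ Finset.univ.filter (fun i => ¬ A i < At i), A i = 1 - qS := by
        linarith [hsplitA]
      have h2 : ∑ i ∈ Finset.univ.filter (fun i => ¬ A i < At i), At i = 1 - pS := by
        linarith [hsplitAt]
      rw [h1, h2]
    rw [e1, e2]
  -- bounds
  have hqS0 : 0 ≤ qS := Finset.sum_nonneg fun i _ => le_of_lt (hApos i)
  have hT0 : 0 ≤ pS - qS := by
    rw [hpSdef, hqSdef, ← Finset.sum_sub_distrib]
    apply Finset.sum_nonneg
    intro i hi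
    rw [hSdef, Finset.mem_filter] at hi
    linarith [hi.2]
  have hb1 : pS ≤ c * qS := by
    rw [hpSdef, hqSdef, Finset.mul_sum]
    exact Finset.sum_le_sum fun i _ => by linarith [hAB i]
  have hb2 : 1 - qS ≤ c * (1 - pS) := by
    have h1 : ∑ i ∈ Finset.univ.filter (fun i => ¬ A i < At i), A i = 1 - qS := by
      linarith [hsplitA]
    have h2 : ∑ i ∈ Finset.univ.filter (fun i => ¬ A i < At i), At i = 1 - pS := by
      linarith [hsplitAt]
    rw [← h1, ← h2, Finset.mul_sum]
    exact Finset.sum_le_sum fun i _ => by linarith [hBA i]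
  have hkey2 : c - 1 ≤ ε * (c + 1) := exp_ratio_le hε0
  -- conclude
  have hfinal : pS - qS ≤ ε := by nlinarith
  rw [habs]
  have hgoal : (Qmax / Real.sqrt d) * B * Real.exp (-μ * ((ℓ : ℝ) - (ℓs : ℝ))) = ε := by
    rw [hεdef, hEdef]; ring
  rw [hgoal]
  linarith
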